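/- Let $\omega$ with $\mathrm{Im}(\omega) > 0$ and for $k = \omega a - b$ with $a, b \in \mathbb{R}$ define $g_k(\zeta) = e^{2\pi\zeta(k - \bar k)/\sqrt{3}} \cdot \frac{\theta_1(\zeta + k|\omega)}{\theta_1(\zeta|\omega)}$ where here $\omega = e^{2\pi i/3}$. Setting $g_{\mathbf{k}}(z) := g_k(3z/(4\pi i \omega))$ with $\mathbf{k} = \sqrt{3}\,\omega k$, one has $g_{\mathbf{k}}(z + \mathbf{a}) = e^{i\langle \mathbf{a}, \mathbf{k}\rangle} g_{\mathbf{k}}(z)$ for every lattice vector $\mathbf{a} = n_1\zeta_1 + n_2\zeta_2 \in \Gamma$, where $\langle z, w\rangle := \mathrm{Re}(z\bar w)$. -/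

import Mathlib

open Complex

noncomputable def ω : ℂ := Complex.exp (2 * Real.pi * Complex.I / 3)
noncomputable def ζ₁ : ℂ := 4 * Real.pi * Complex.I * ω / 3
noncomputable def ζ₂ : ℂ := 4 * Real.pi * Complex.I * ω ^ 2 / 3

/-- The Jacobi theta function `θ₁(ζ|τ)`. -/
noncomputable def theta1 (ζ τ : ℂ) : ℂ :=
  -∑' n : ℤ, Complex.exp (Real.pi * Complex.I * ((n : ℂ) + 1 / 2) ^ 2 * τ +
      2 * Real.pi * Complex.I * ((n : ℂ) + 1 / 2) * (ζ + 1 / 2))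

noncomputable def gsmall (k ζ : ℂ) : ℂ :=
  Complex.exp (2 * Real.pi * ζ * (k - starRingEnd ℂ k) / Real.sqrt 3) *
    (theta1 (ζ + k) ω / theta1 ζ ω)

noncomputable def gBloch (k z : ℂ) : ℂ :=
  gsmall k (3 * z / (4 * Real.pi * Complex.I * ω))

lemma omega_eq : ω = (-(1/2) : ℝ) + ((Real.sqrt 3 / 2 : ℝ) : ℂ) * Complex.I := by
  have h : (2 * Real.pi * Complex.I / 3) = ((2 * Real.pi / 3 : ℝ) : ℂ) * Complex.I := by
    push_cast; ring
  rw [ω, h, Complex.exp_mul_I]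
  have hc : Real.cos (2 * Real.pi / 3) = -(1/2) := by
    rw [show (2 * Real.pi / 3 : ℝ) = Real.pi - Real.pi / 3 by ring, Real.cos_pi_sub,
      Real.cos_pi_div_three]
  have hs : Real.sin (2 * Real.pi / 3) = Real.sqrt 3 / 2 := by
    rw [show (2 * Real.pi / 3 : ℝ) = Real.pi - Real.pi / 3 by ring, Real.sin_pi_sub,
      Real.sin_pi_div_three]
  rw [← Complex.ofReal_cos, ← Complex.ofReal_sin, hc, hs]

lemma theta1_shift (ζ : ℂ) (m n : ℤ) :
    theta1 (ζ + ((m : ℂ) + (n : ℂ) * ω)) ω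
      = Complex.exp ((Real.pi : ℂ) * Complex.I * m - Real.pi * Complex.I * n
          - Real.pi * Complex.I * (n : ℂ) ^ 2 * ω - 2 * Real.pi * Complex.I * n * ζ)
        * theta1 ζ ω := by
  set C : ℂ := (Real.pi : ℂ) * Complex.I * m - Real.pi * Complex.I * n
          - Real.pi * Complex.I * (n : ℂ) ^ 2 * ω - 2 * Real.pi * Complex.I * n * ζ with hC
  have hstep : ∀ j : ℤ,
      Complex.exp (Real.pi * Complex.I * ((j : ℂ) + 1 / 2) ^ 2 * ω +
        2 * Real.pi * Complex.I * ((j : ℂ) + 1 / 2) * ((ζ + ((m : ℂ) + (n : ℂ) * ω)) + 1 / 2))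
      = C.exp * Complex.exp (Real.pi * Complex.I * (((j + n : ℤ) : ℂ) + 1 / 2) ^ 2 * ω +
          2 * Real.pi * Complex.I * (((j + n : ℤ) : ℂ) + 1 / 2) * (ζ + 1 / 2)) := by
    intro j
    have key : Real.pi * Complex.I * ((j : ℂ) + 1 / 2) ^ 2 * ω +
        2 * Real.pi * Complex.I * ((j : ℂ) + 1 / 2) * ((ζ + ((m : ℂ) + (n : ℂ) * ω)) + 1 / 2)
        = (C + (Real.pi * Complex.I * (((j + n : ℤ) : ℂ) + 1 / 2) ^ 2 * ω +
          2 * Real.pi * Complex.I * (((j + n : ℤ) : ℂ) + 1 / 2) * (ζ + 1 / 2)))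
          + ((j * m : ℤ) : ℂ) * (2 * Real.pi * Complex.I) := by
      push_cast; ring
    rw [key, Complex.exp_add, Complex.exp_add, Complex.exp_int_mul_two_pi_mul_I, mul_one]
  have hre : (∑' j : ℤ, Complex.exp (Real.pi * Complex.I * (((j + n : ℤ) : ℂ) + 1 / 2) ^ 2 * ω +
          2 * Real.pi * Complex.I * (((j + n : ℤ) : ℂ) + 1 / 2) * (ζ + 1 / 2)))
      = ∑' j : ℤ, Complex.exp (Real.pi * Complex.I * ((j : ℂ) + 1 / 2) ^ 2 * ω +
          2 * Real.pi * Complex.I * ((j : ℂ) + 1 / 2) * (ζ + 1 / 2)) :=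
    (Equiv.addRight n).tsum_eq (fun j : ℤ => Complex.exp
      (Real.pi * Complex.I * ((j : ℂ) + 1 / 2) ^ 2 * ω +
        2 * Real.pi * Complex.I * ((j : ℂ) + 1 / 2) * (ζ + 1 / 2)))
  rw [theta1, theta1, tsum_congr hstep, tsum_mul_left, hre]
  ring

theorem gBloch_periodicity (a b : ℝ) (k : ℂ) (hk : k = ω * a - b)
    (K : ℂ) (hK : K = Real.sqrt 3 * ω * k) (n₁ n₂ : ℤ) (z : ℂ) :
    gBloch k (z + (n₁ * ζ₁ + n₂ * ζ₂)) =
      Complex.exp (Complex.I *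
          ((((n₁ * ζ₁ + n₂ * ζ₂) * starRingEnd ℂ K).re : ℝ) : ℂ)) *
        gBloch k z := by
  have hπ : (Real.pi : ℂ) ≠ 0 := by exact_mod_cast Real.pi_ne_zero
  have hω : ω ≠ 0 := Complex.exp_ne_zero _
  have hs3 : (0 : ℝ) < Real.sqrt 3 := Real.sqrt_pos.mpr (by norm_num)
  have hs3c : ((Real.sqrt 3 : ℝ) : ℂ) ≠ 0 := by exact_mod_cast hs3.ne'
  have hs2 : Real.sqrt 3 ^ 2 = 3 := Real.sq_sqrt (by norm_num)
  have hS2 : ((Real.sqrt 3 : ℝ) : ℂ) ^ 2 = 3 := by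
    rw [← Complex.ofReal_pow, hs2]; norm_num
  -- explicit forms
  have hA : (n₁ : ℂ) * ζ₁ + n₂ * ζ₂
      = ((2 * Real.pi * Real.sqrt 3 * (n₂ - n₁) / 3 : ℝ) : ℂ)
        + ((-(2 * Real.pi * (n₁ + n₂)) / 3 : ℝ) : ℂ) * Complex.I := by
    rw [ζ₁, ζ₂, omega_eq]
    push_cast
    linear_combination ((2 * (Real.pi : ℂ) * ((Real.sqrt 3 : ℝ) : ℂ) / 3) * ((n₁ : ℂ) - n₂)
        + ((Real.pi : ℂ) * n₂ * ((Real.sqrt 3 : ℝ) : ℂ) ^ 2 / 3) * Complex.I) * Complex.I_sq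
      - ((Real.pi : ℂ) * n₂ * Complex.I / 3) * hS2
  have hKc : starRingEnd ℂ K
      = ((Real.sqrt 3 * (b - a) / 2 : ℝ) : ℂ) + ((3 * (a + b) / 2 : ℝ) : ℂ) * Complex.I := by
    rw [hK, hk, omega_eq]
    simp only [map_mul, map_sub, map_add, Complex.conj_ofReal, Complex.conj_I]
    push_cast
    linear_combination (((Real.sqrt 3 : ℝ) : ℂ) ^ 3 * (a : ℂ) / 4) * Complex.I_sq
      + (((a : ℂ) + b) / 2 * Complex.I - ((Real.sqrt 3 : ℝ) : ℂ) * a / 4) * hS2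
  have hre : (((n₁ : ℂ) * ζ₁ + n₂ * ζ₂) * starRingEnd ℂ K).re
      = 2 * Real.pi * (n₁ * a + n₂ * b) := by
    rw [hA, hKc]
    simp only [Complex.add_re, Complex.add_im, Complex.mul_re, Complex.mul_im,
      Complex.I_re, Complex.I_im, Complex.ofReal_re, Complex.ofReal_im]
    ring_nf
    linear_combination (Real.pi * ((n₂ : ℝ) - n₁) * (b - a) / 3) * hs2
  -- argument shift
  set ζ : ℂ := 3 * z / (4 * Real.pi * Complex.I * ω) with hζdef
  have harg : 3 * (z + ((n₁ : ℂ) * ζ₁ + n₂ * ζ₂)) / (4 * Real.pi * Complex.I * ω)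
      = ζ + ((n₁ : ℂ) + (n₂ : ℂ) * ω) := by
    rw [hζdef, ζ₁, ζ₂]
    field_simp
  have hdiff : k - starRingEnd ℂ k = ((Real.sqrt 3 : ℝ) : ℂ) * a * Complex.I := by
    rw [hk]
    simp only [map_mul, map_sub, map_add, Complex.conj_ofReal, Complex.conj_I, omega_eq]
    push_cast
    ring
  rw [gBloch, gBloch, ← hζdef, harg, gsmall, gsmall]
  have hratio : theta1 (ζ + ((n₁ : ℂ) + (n₂ : ℂ) * ω) + k) ω
        / theta1 (ζ + ((n₁ : ℂ) + (n₂ : ℂ) * ω)) ω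
      = Complex.exp (-(2 * Real.pi * Complex.I * n₂ * k)) * (theta1 (ζ + k) ω / theta1 ζ ω) := by
    rw [show ζ + ((n₁ : ℂ) + (n₂ : ℂ) * ω) + k = (ζ + k) + ((n₁ : ℂ) + (n₂ : ℂ) * ω) by ring,
      theta1_shift (ζ + k) n₁ n₂, theta1_shift ζ n₁ n₂, mul_div_mul_comm, ← Complex.exp_sub]
    congr 2
    ring
  rw [hratio, hre]
  rw [← mul_assoc, ← mul_assoc, ← Complex.exp_add, ← Complex.exp_add]
  congr 2
  rw [hdiff, hk]
  push_cast
  field_simp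
  ring
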